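/- Let $S$ be a right LCM monoid with core $S_c$ and core equivalence $\sim$ (where $s \sim t$ iff $sa = tb$ for some $a,b \in S_c$). Fix $a, b \in S_c$ and $s \in S$ with $[as] = [bs]$. If there exist $s' \in S$ with $s' \sim s$ and $c \in S_c$ such that $as'c = bs'c$, then there exists $d \in S_c$ such that $asd = bsd$. (That is, the property of absorbing the difference between $a$ and $b$ is invariant under core equivalence.) -/
import Mathlib


/-- The principal right ideal `sS`. -/
def rIdeal {S : Type*} [Monoid S] (s : S) : Set S := {z | ∃ x, z = s * x}

/-- `S` is left cancellative. -/
def LeftCanc (S : Type*) [Monoid S] : Prop := ∀ a b c : S, a * b = a * c → b = c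

/-- `s` and `t` admit a right common multiple. -/
def Cap {S : Type*} [Monoid S] (s t : S) : Prop := (rIdeal s ∩ rIdeal t).Nonempty

/-- Any two elements with a right common multiple have a right LCM. -/
def IsRightLCM (S : Type*) [Monoid S] : Prop :=
  ∀ s t : S, Cap s t → ∃ r : S, rIdeal s ∩ rIdeal t = rIdeal r

/-- The core `S_c` of a monoid. -/
def core (S : Type*) [Monoid S] : Set S := {a | ∀ s : S, Cap a s}

/-- Core equivalence: `s ∼ t` iff `s a = t b` for some `a, b` in the core. -/
def coreEquiv {S : Type*} [Monoid S] (s t : S) : Prop :=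
  ∃ a ∈ core S, ∃ b ∈ core S, s * a = t * b

/-- Absorbing the difference between `a` and `b` is invariant under core equivalence. -/
theorem absorbing_invariant (S : Type*) [Monoid S] (hlc : LeftCanc S)
    (hlcm : IsRightLCM S) (a b : S) (ha : a ∈ core S) (hb : b ∈ core S) (s : S)
    (hfix : coreEquiv (a * s) (b * s))
    (s' : S) (hs' : coreEquiv s' s) (c : S) (hc : c ∈ core S)
    (habs : a * s' * c = b * s' * c) :
    ∃ d ∈ core S, a * s * d = b * s * d := by
  obtain ⟨u, hu, v, hv, huv⟩ := hs'
  obtain ⟨r, hr⟩ := hlcm u c (hu c)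
  have hrmem : r ∈ rIdeal u ∩ rIdeal c := by rw [hr]; exact ⟨1, (mul_one r).symm⟩
  obtain ⟨⟨y, hy⟩, ⟨x, hx⟩⟩ := hrmem
  have hycore : y ∈ core S := by
    intro t
    obtain ⟨z, ⟨p, hp⟩, ⟨q, hq⟩⟩ := hc (u * t)
    have hz : z ∈ rIdeal u ∩ rIdeal c := ⟨⟨t * q, by rw [hq, mul_assoc]⟩, ⟨p, hp⟩⟩
    rw [hr] at hz
    obtain ⟨m, hm⟩ := hz
    have heq : u * (y * m) = u * (t * q) := by
      rw [← mul_assoc, ← hy, ← hm, hq, mul_assoc]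
    exact ⟨y * m, ⟨m, rfl⟩, ⟨q, hlc u _ _ heq⟩⟩
  have hd : v * y ∈ core S := by
    intro t
    obtain ⟨z, ⟨p, hp⟩, ⟨q, hq⟩⟩ := hv t
    obtain ⟨z2, ⟨m, hm⟩, ⟨n, hn⟩⟩ := hycore p
    exact ⟨v * y * m, ⟨m, by rw [mul_assoc]⟩,
      ⟨q * n, by rw [mul_assoc v, ← hm, hn, ← mul_assoc, ← hp, hq, mul_assoc]⟩⟩
  refine ⟨v * y, hd, ?_⟩
  have key : s * (v * y) = s' * (c * x) := by
    rw [← mul_assoc, ← huv, mul_assoc, ← hy, hx]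
  calc a * s * (v * y) = a * (s * (v * y)) := by rw [mul_assoc]
    _ = a * s' * c * x := by rw [key, ← mul_assoc, ← mul_assoc]
    _ = b * s' * c * x := by rw [habs]
    _ = b * (s * (v * y)) := by rw [mul_assoc, mul_assoc, ← key]
    _ = b * s * (v * y) := by rw [mul_assoc]
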